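/- Let Λ be a group with homomorphism ν: Λ → V as above, Λ⁺ = {λ : ν(λ) dominant}, and C[Λ⁺] the monoid algebra of Λ⁺ over a field C. The C-linear map χ: 𝒜 → C[Λ⁺] sending E(λ) to τ_λ if λ ∈ Λ⁺ and to 0 otherwise is an algebra homomorphism, where 𝒜 is the algebra with multiplication E(λ₁)E(λ₂) = E(λ₁λ₂) if ν(λ₁), ν(λ₂) lie in a common closed chamber and 0 otherwise. -/

import Mathlib

open Module

variable {V : Type} [AddCommGroup V] [Module ℝ V]

/-- A reduced crystallographic root system in the dual of `V`, with a chosen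
positive system. -/
structure RootSystemData (V : Type) [AddCommGroup V] [Module ℝ V] where
  roots : Finset (Module.Dual ℝ V)
  coroot : Module.Dual ℝ V → V
  pos : Finset (Module.Dual ℝ V)
  root_ne_zero : ∀ α ∈ roots, α ≠ 0
  coroot_self : ∀ α ∈ roots, α (coroot α) = 2
  reflection_mem : ∀ α ∈ roots, ∀ β ∈ roots, β - β (coroot α) • α ∈ roots
  crystallographic : ∀ α ∈ roots, ∀ β ∈ roots, ∃ n : ℤ, β (coroot α) = (n : ℝ)
  reduced : ∀ α ∈ roots, ∀ t : ℝ, t • α ∈ roots → t = 1 ∨ t = -1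
  pos_subset : pos ⊆ roots
  pos_or_neg : ∀ α ∈ roots, α ∈ pos ∨ -α ∈ pos
  pos_not_neg : ∀ α ∈ pos, -α ∉ pos
  pos_add : ∀ α ∈ pos, ∀ β ∈ pos, α + β ∈ roots → α + β ∈ pos

/-- The contragredient action of a linear automorphism of `V` on the dual space:
`(w β)(v) = β (w⁻¹ v)`. -/
noncomputable def dualAct (w : V ≃ₗ[ℝ] V) (β : Module.Dual ℝ V) : Module.Dual ℝ V :=
  β.comp w.symm.toLinearMap

namespace RootSystemData

variable (D : RootSystemData V)

/-- `ℓ(v) = Σ_{β ∈ Σ⁺} |⟨v, β⟩|`, the length of the translation by `v`. -/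
noncomputable def coLen (v : V) : ℝ := ∑ β ∈ D.pos, |β v|

/-- The reflection `s_α` acting on `V`, as a linear automorphism. -/
noncomputable def reflV (α : Module.Dual ℝ V) (h : α (D.coroot α) = 2) : V ≃ₗ[ℝ] V where
  toFun := fun v => v - α v • D.coroot α
  map_add' := by intro x y; simp only [map_add, add_smul]; abel
  map_smul' := by intro r x; simp only [map_smul, smul_eq_mul, RingHom.id_apply, smul_sub,
    smul_smul]
  invFun := fun v => v - α v • D.coroot α
  left_inv := by
    intro v
    simp only [map_sub, map_smul, smul_eq_mul, h]
    have : α v - α v * 2 = -(α v) := by ring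
    rw [this, neg_smul, sub_neg_eq_add, sub_add_cancel]
  right_inv := by
    intro v
    simp only [map_sub, map_smul, smul_eq_mul, h]
    have : α v - α v * 2 = -(α v) := by ring
    rw [this, neg_smul, sub_neg_eq_add, sub_add_cancel]

/-- The reflection attached to a root. -/
noncomputable def sRef (α : Module.Dual ℝ V) (h : α ∈ D.roots) : V ≃ₗ[ℝ] V :=
  D.reflV α (D.coroot_self α h)

/-- The Weyl group, as the subgroup of `GL(V)` generated by the reflections in the roots. -/
noncomputable def weylGroup : Subgroup (V ≃ₗ[ℝ] V) :=
  Subgroup.closure {e | ∃ α, ∃ h : α ∈ D.roots, e = D.sRef α h}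

open scoped Classical in
/-- The length of a Weyl group element: the number of positive roots made negative. -/
noncomputable def lenW (w : V ≃ₗ[ℝ] V) : ℕ :=
  (D.pos.filter fun β => dualAct w β ∉ D.pos).card

/-- The Bruhat order, via the standard characterization: the reflexive-transitive
closure of the relation `x < t x` whenever `t` is a reflection and `ℓ(x) < ℓ(t x)`. -/
def bruhatLE (x y : V ≃ₗ[ℝ] V) : Prop :=
  Relation.ReflTransGen
    (fun u v => D.lenW u < D.lenW v ∧ ∃ α, ∃ h : α ∈ D.roots, v = D.sRef α h * u) x y

/-- Strict Bruhat order. -/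
def bruhatLT (x y : V ≃ₗ[ℝ] V) : Prop := D.bruhatLE x y ∧ x ≠ y

/-- A simple (positive) root: a positive root which is not the sum of two positive roots. -/
def IsSimpleRoot (α : Module.Dual ℝ V) : Prop :=
  α ∈ D.pos ∧ ¬ ∃ β ∈ D.pos, ∃ γ ∈ D.pos, α = β + γ

/-- The set `Δ_w = {α ∈ Δ : w(α) > 0}`. -/
def DeltaW (w : V ≃ₗ[ℝ] V) : Set (Module.Dual ℝ V) :=
  {α | D.IsSimpleRoot α ∧ dualAct w α ∈ D.pos}

/-- The parabolic subgroup `W_Θ` generated by the reflections in the roots belonging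
to `Θ`. -/
noncomputable def parabolic (Θ : Set (Module.Dual ℝ V)) : Subgroup (V ≃ₗ[ℝ] V) :=
  Subgroup.closure {e | ∃ α, ∃ h : α ∈ D.roots, α ∈ Θ ∧ e = D.sRef α h}

/-- A dominant coweight. -/
def IsDominant (v : V) : Prop := ∀ β ∈ D.pos, 0 ≤ β v

end RootSystemData

/-- `v` and `w` lie in a common closed Weyl chamber: no root hyperplane strictly
separates them. -/
def RootSystemData.SameClosedChamber (D : RootSystemData V) (v w : V) : Prop :=
  ∀ β ∈ D.roots, 0 < β v → 0 ≤ β w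

open scoped Classical in
/-- The `C`-linear map `χ : 𝒜 → C[Λ⁺]`, `E(λ) ↦ τ_λ` if
`ν(λ)` is dominant and `E(λ) ↦ 0` otherwise, is an algebra homomorphism: it sends
the unit `E(1)` to `1` and, on basis elements, `χ(E(λ₁)E(λ₂)) = χ(E(λ₁))·χ(E(λ₂))`
(here `C[Λ⁺]` is realized as the span of the `τ_λ`, `λ ∈ Λ⁺`, inside `C[Λ]`). -/
theorem chi_is_algebra_hom (D : RootSystemData V)
    {Λ : Type} [Group Λ] (ν : Λ → V) (hν : ∀ a b : Λ, ν (a * b) = ν a + ν b)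
    {C : Type} [Field C] :
    ((if D.IsDominant (ν (1 : Λ)) then MonoidAlgebra.single (1 : Λ) (1 : C) else 0) = 1) ∧
    ∀ l₁ l₂ : Λ,
      (if D.SameClosedChamber (ν l₁) (ν l₂) then
          (if D.IsDominant (ν (l₁ * l₂)) then
            MonoidAlgebra.single (l₁ * l₂) (1 : C) else 0)
        else 0) =
      (if D.IsDominant (ν l₁) then MonoidAlgebra.single l₁ (1 : C) else 0) *
        (if D.IsDominant (ν l₂) then MonoidAlgebra.single l₂ (1 : C) else 0) := by
  have hν1 : ν (1 : Λ) = 0 := by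
    have h := hν 1 1
    rw [mul_one] at h
    exact right_eq_add.mp h
  have hneg : ∀ β ∈ D.roots, -β ∈ D.roots := by
    intro β h
    have h2 : β - β (D.coroot β) • β ∈ D.roots := D.reflection_mem β h β h
    rwa [D.coroot_self β h, two_smul, ← sub_sub, sub_self, zero_sub] at h2
  have key : ∀ v w : V, D.SameClosedChamber v w → D.IsDominant (v + w) →
      D.IsDominant v ∧ D.IsDominant w := by
    intro v w hc hd
    have hvw : ∀ β ∈ D.pos, ¬ (β v ≤ 0 ∧ β w ≤ 0 ∧ (β v < 0 ∨ β w < 0)) := by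
      intro β hβ ⟨h1, h2, h3⟩
      have := hd β hβ
      rw [map_add] at this
      rcases h3 with h3 | h3 <;> linarith
    constructor <;> intro β hβ <;> by_contra hlt <;> push_neg at hlt
    · have hβr := D.pos_subset hβ
      have hnb := hneg β hβr
      have := hc (-β) hnb (by simpa using hlt)
      exact hvw β hβ ⟨le_of_lt hlt, by simpa using this, Or.inl hlt⟩
    · have hβr := D.pos_subset hβ
      have hv : β v ≤ 0 := by
        by_contra hv
        push_neg at hv
        exact absurd (hc β hβr hv) (not_le.mpr hlt)
      exact hvw β hβ ⟨hv, le_of_lt hlt, Or.inr hlt⟩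
  constructor
  · rw [if_pos]
    · rfl
    · intro β hβ; rw [hν1]; simp
  · intro l₁ l₂
    by_cases h1 : D.IsDominant (ν l₁) <;> by_cases h2 : D.IsDominant (ν l₂)
    · have hc : D.SameClosedChamber (ν l₁) (ν l₂) := by
        intro β hβ hpos
        rcases D.pos_or_neg β hβ with hp | hp
        · exact h2 β hp
        · have := h1 (-β) hp
          simp only [LinearMap.neg_apply] at this
          linarith
      have hd : D.IsDominant (ν (l₁ * l₂)) := by
        intro β hβ
        rw [hν, map_add]
        exact add_nonneg (h1 β hβ) (h2 β hβ)
      rw [if_pos hc, if_pos hd, if_pos h1, if_pos h2,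
        MonoidAlgebra.single_mul_single, mul_one]
    all_goals {
      rw [show (if D.IsDominant (ν l₁) then MonoidAlgebra.single l₁ (1 : C) else 0) *
        (if D.IsDominant (ν l₂) then MonoidAlgebra.single l₂ (1 : C) else 0) = 0 by
          first
          | rw [if_neg h1, zero_mul]
          | rw [if_neg h2, mul_zero]]
      by_cases hc : D.SameClosedChamber (ν l₁) (ν l₂)
      · rw [if_pos hc, if_neg]
        intro hd
        rw [hν] at hd
        obtain ⟨ha, hb⟩ := key _ _ hc hd
        first | exact h1 ha | exact h2 hb
      · rw [if_neg hc] }
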